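/- Let R be a uniform Banach C-algebra and let x ∈ R be topologically nilpotent (i.e. x^n → 0 as n → ∞). Then the series ∑_{n≥1} (−1)^{n+1} x^n/n converges in R. -/

import Mathlib

open Filter Real

lemma aux_geom_bound {R : Type*} [NormedRing R] (x : R)
    (hx : Tendsto (fun n : ℕ => x ^ n) atTop (nhds 0)) :
    ∃ K r : ℝ, 0 ≤ K ∧ 0 < r ∧ r < 1 ∧ ∀ n : ℕ, ‖x ^ n‖ ≤ K * r ^ n := by
  have h2 : (0:ℝ) < 1/2 := by norm_num
  obtain ⟨N₀, hN₀⟩ := Metric.tendsto_atTop.mp hx (1/2) h2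
  set N := max N₀ 1 with hN
  have hN1 : 1 ≤ N := le_max_right _ _
  have hxN : ‖x ^ N‖ ≤ 1/2 := by
    have := hN₀ N (le_max_left _ _)
    rw [dist_eq_norm, sub_zero] at this
    linarith
  set r : ℝ := (1/2 : ℝ) ^ ((N:ℝ)⁻¹) with hr
  have hr0 : 0 < r := Real.rpow_pos_of_pos h2 _
  have hr1 : r < 1 := Real.rpow_lt_one (by norm_num) (by norm_num)
      (by positivity)
  have hrN : r ^ N = 1/2 := by
    rw [hr, ← Real.rpow_natCast ((1/2:ℝ) ^ ((N:ℝ)⁻¹)) N, ← Real.rpow_mul (by norm_num),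
      inv_mul_cancel₀ (Nat.cast_ne_zero.mpr (by omega) : (N:ℝ) ≠ 0), Real.rpow_one]
  obtain ⟨i₀, -, hM⟩ := (Finset.range N).exists_max_image (fun i => ‖x ^ i‖)
      ⟨0, Finset.mem_range.mpr hN1⟩
  set M := ‖x ^ i₀‖ with hMdef
  have hM0 : 0 ≤ M := norm_nonneg _
  refine ⟨2 * M, r, by positivity, hr0, hr1, fun n => ?_⟩
  set q := n / N with hq
  set s := n % N with hs
  have hsN : s < N := Nat.mod_lt _ (by omega)
  have hn : n = N * q + s := by rw [hq, hs, Nat.div_add_mod]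
  have key1 : ‖x ^ n‖ ≤ M * (1/2) ^ q := by
    rcases Nat.eq_zero_or_pos q with hq0 | hq0
    · rw [hq0, pow_zero, mul_one]
      have : n = s := by rw [hq0, mul_zero, zero_add] at hn; exact hn
      rw [this]
      exact hM s (Finset.mem_range.mpr hsN)
    · calc ‖x ^ n‖ = ‖(x ^ N) ^ q * x ^ s‖ := by rw [← pow_mul, ← pow_add, ← hn]
        _ ≤ ‖(x ^ N) ^ q‖ * ‖x ^ s‖ := norm_mul_le _ _
        _ ≤ ‖x ^ N‖ ^ q * ‖x ^ s‖ := by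
            gcongr; exact norm_pow_le' _ hq0
        _ ≤ (1/2) ^ q * M :=
            mul_le_mul (pow_le_pow_left₀ (norm_nonneg _) hxN q)
              (hM s (Finset.mem_range.mpr hsN)) (norm_nonneg _) (by positivity)
        _ = M * (1/2) ^ q := mul_comm _ _
  have key2 : (1/2 : ℝ) ^ q ≤ 2 * r ^ n := by
    have h1 : r ^ n = (1/2) ^ q * r ^ s := by
      rw [hn, pow_add, pow_mul, hrN]
    have h2' : r ^ N ≤ r ^ s := pow_le_pow_of_le_one hr0.le hr1.le hsN.le
    rw [hrN] at h2'
    calc (1/2 : ℝ) ^ q = 2 * ((1/2) ^ q * (1/2)) := by ring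
      _ ≤ 2 * ((1/2) ^ q * r ^ s) := by gcongr <;> positivity
      _ = 2 * r ^ n := by rw [h1]
  calc ‖x ^ n‖ ≤ M * (1/2) ^ q := key1
    _ ≤ M * (2 * r ^ n) := by gcongr
    _ = 2 * M * r ^ n := by ring

lemma aux_padic_norm_nat_ge {p : ℕ} [Fact p.Prime] (n : ℕ) (hn : 0 < n) :
    (1:ℝ)/n ≤ ‖(n : ℚ_[p])‖ := by
  have hp : p.Prime := Fact.out
  set v := n.factorization p with hv
  set m := ordCompl[p] n with hm'
  have hsplit : (n : ℚ_[p]) = (p : ℚ_[p]) ^ v * (m : ℚ_[p]) := by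
    rw [← Nat.cast_pow, ← Nat.cast_mul, Nat.ordProj_mul_ordCompl_eq_self]
  have hm : ‖(m : ℚ_[p])‖ = 1 := by
    have h1 : ‖(m : ℚ_[p])‖ ≤ 1 := by
      exact_mod_cast Padic.norm_int_le_one (m : ℤ)
    have h2 : ¬ ‖(m : ℚ_[p])‖ < 1 := by
      rw [show ((m : ℕ) : ℚ_[p]) = ((m : ℤ) : ℚ_[p]) by push_cast; ring,
        Padic.norm_intCast_lt_one_iff]
      exact_mod_cast Nat.not_dvd_ordCompl hp hn.ne'
    linarith
  have hp0 : (0:ℝ) < (p:ℝ) := by exact_mod_cast hp.pos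
  have hpv : (0:ℝ) < (p:ℝ) ^ v := by positivity
  have heq : ‖(n : ℚ_[p])‖ = ((p:ℝ) ^ v)⁻¹ := by
    rw [hsplit, norm_mul, norm_pow, Padic.norm_p, hm, mul_one, inv_pow]
  rw [heq, one_div]
  apply inv_anti₀ hpv
  exact_mod_cast Nat.ordProj_le p hn.ne'



/-- Let `C = ℂ_p` (formalized as a complete algebraically closed
nonarchimedean normed field with an isometric embedding of `ℚ_p`) and let `R` be a
uniform Banach `C`-algebra (uniform: the set of power-bounded elements is bounded).
For every topologically nilpotent `x ∈ R` the logarithm series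
`∑_{n ≥ 1} (−1)^(n+1) xⁿ/n` converges in `R` (the `n = 0` term below is zero since
`(0 : C)⁻¹ = 0`). -/
theorem summable_log_series_of_topologically_nilpotent
    {p : ℕ} [Fact p.Prime]
    (C : Type*) [NormedField C] [CompleteSpace C] [IsUltrametricDist C]
    [IsAlgClosed C] [Algebra ℚ_[p] C]
    (hisom : ∀ q : ℚ_[p], ‖algebraMap ℚ_[p] C q‖ = ‖q‖)
    (R : Type*) [NormedRing R] [CompleteSpace R] [NormedAlgebra C R]
    (huniform : Bornology.IsBounded {x : R | ∃ M : ℝ, ∀ n : ℕ, ‖x ^ n‖ ≤ M})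
    (x : R) (hx : Filter.Tendsto (fun n : ℕ => x ^ n) Filter.atTop (nhds 0)) :
    Summable (fun n : ℕ => ((-1 : C) ^ (n + 1) * ((n : C))⁻¹) • x ^ n) := by
  obtain ⟨K, r, hK0, hr0, hr1, hKr⟩ := aux_geom_bound x hx
  -- norm of (n : C)⁻¹ is at most n
  have hcoef : ∀ n : ℕ, ‖((n : C))⁻¹‖ ≤ n := by
    intro n
    rcases Nat.eq_zero_or_pos n with h0 | h0
    · simp [h0]
    · have hcast : ((n : C)) = algebraMap ℚ_[p] C ((n : ℚ_[p])) := by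
        rw [map_natCast]
      have h1 : (1:ℝ)/n ≤ ‖(n : C)‖ := by
        rw [hcast, hisom]
        exact aux_padic_norm_nat_ge n h0
      have hn0 : (0:ℝ) < (n:ℝ) := by exact_mod_cast h0
      rw [norm_inv]
      calc ‖(n : C)‖⁻¹ ≤ ((1:ℝ)/n)⁻¹ := inv_anti₀ (by positivity) h1
        _ = n := by rw [one_div, inv_inv]
  -- comparison series
  have hgeom : Summable (fun n : ℕ => K * ((n:ℝ) ^ 1 * r ^ n)) := by
    exact (summable_pow_mul_geometric_of_norm_lt_one 1
      (by rw [Real.norm_eq_abs, abs_of_pos hr0]; exact hr1)).mul_left K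
  apply Summable.of_norm_bounded hgeom
  intro n
  rw [norm_smul, norm_mul, norm_pow, norm_neg, norm_one, one_pow, one_mul, pow_one]
  calc ‖((n : C))⁻¹‖ * ‖x ^ n‖ ≤ (n:ℝ) * (K * r ^ n) :=
        mul_le_mul (hcoef n) (hKr n) (norm_nonneg _) (Nat.cast_nonneg n)
    _ = K * ((n:ℝ) * r ^ n) := by ring
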